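/- Let σ_w, σ_n, σ_wn > 0, τ ≥ 0, and let s, s' ∈ (0,1) with s' ≠ s. Define H(x, y) = (x·ln x − y·ln y)/(x − y) for x ≠ y, and set μ_w = σ_w·(H(s', s) − 1) + σ_wn·(1 − (s + s')/2) + τ·(ln s' − ln s) and μ_n = σ_n·(H(1 − s', 1 − s) − 1) + σ_wn·(s + s')/2 + τ·(ln(1 − s') − ln(1 − s)). Then, with F(s) = σ_w·s·(ln s − 1) + σ_n·(1 − s)·(ln(1 − s) − 1) + σ_wn·s·(1 − s): F(s') − F(s) ≤ μ_w·(s' − s) + μ_n·((1 − s') − (1 − s)). -/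

import Mathlib

/-- The secant-slope quotient of `x ↦ x log x`. -/
noncomputable def Hsec (x y : ℝ) : ℝ := (x * Real.log x - y * Real.log y) / (x - y)

/-- Energy inequality for the second-order (secant/stabilized) chemical potentials:
for `σ_w, σ_n, σ_wn > 0`, `τ ≥ 0`, `s, s' ∈ (0,1)` with `s' ≠ s`, setting
`μ_w = σ_w (H(s',s) - 1) + σ_wn (1 - (s+s')/2) + τ (log s' - log s)` and
`μ_n = σ_n (H(1-s',1-s) - 1) + σ_wn (s+s')/2 + τ (log(1-s') - log(1-s))`, one has
`F s' - F s ≤ μ_w (s' - s) + μ_n ((1-s') - (1-s))` where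
`F s = σ_w s (log s - 1) + σ_n (1-s)(log(1-s) - 1) + σ_wn s(1-s)`. -/
theorem stmt10 (σw σn σwn τ : ℝ) (hσw : 0 < σw) (hσn : 0 < σn) (hσwn : 0 < σwn)
    (hτ : 0 ≤ τ) (s s' : ℝ) (hs : s ∈ Set.Ioo (0 : ℝ) 1) (hs' : s' ∈ Set.Ioo (0 : ℝ) 1)
    (hne : s' ≠ s)
    (μw μn : ℝ)
    (hμw : μw = σw * (Hsec s' s - 1) + σwn * (1 - (s + s') / 2)
      + τ * (Real.log s' - Real.log s))
    (hμn : μn = σn * (Hsec (1 - s') (1 - s) - 1) + σwn * ((s + s') / 2)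
      + τ * (Real.log (1 - s') - Real.log (1 - s)))
    (F : ℝ → ℝ)
    (hF : ∀ x, F x = σw * x * (Real.log x - 1) + σn * (1 - x) * (Real.log (1 - x) - 1)
      + σwn * x * (1 - x)) :
    F s' - F s ≤ μw * (s' - s) + μn * ((1 - s') - (1 - s)) := by
  obtain ⟨hs0, hs1⟩ := hs
  obtain ⟨hs'0, hs'1⟩ := hs'
  have hd : s' - s ≠ 0 := sub_ne_zero.mpr hne
  have hd2 : (1 - s') - (1 - s) ≠ 0 := by
    intro h; apply hd; linarith
  have h1 : Hsec s' s * (s' - s) = s' * Real.log s' - s * Real.log s := by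
    unfold Hsec; field_simp
  have h2 : Hsec (1 - s') (1 - s) * ((1 - s') - (1 - s))
      = (1 - s') * Real.log (1 - s') - (1 - s) * Real.log (1 - s) := by
    unfold Hsec; field_simp
  have hA : 0 ≤ (s' - s) * (Real.log s' - Real.log s) := by
    rcases hne.lt_or_gt with h | h
    · have := Real.log_le_log hs'0 h.le
      nlinarith
    · have := Real.log_le_log hs0 h.le
      nlinarith
  have hB : 0 ≤ ((1 - s') - (1 - s)) * (Real.log (1 - s') - Real.log (1 - s)) := by
    rcases hne.lt_or_gt with h | h
    · have h0 : (0:ℝ) < 1 - s := by linarith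
      have := Real.log_le_log h0 (by linarith : 1 - s ≤ 1 - s')
      nlinarith
    · have h0 : (0:ℝ) < 1 - s' := by linarith
      have := Real.log_le_log h0 (by linarith : 1 - s' ≤ 1 - s)
      nlinarith
  have key : μw * (s' - s) + μn * ((1 - s') - (1 - s)) - (F s' - F s)
      = τ * ((s' - s) * (Real.log s' - Real.log s))
        + τ * (((1 - s') - (1 - s)) * (Real.log (1 - s') - Real.log (1 - s))) := by
    rw [hμw, hμn, hF, hF]
    linear_combination σw * h1 + σn * h2
  nlinarith [mul_nonneg hτ hA, mul_nonneg hτ hB]
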